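/- arXiv:0910.4850 — 3 statements merged into one kernel-verified Lean document; each statement's English description precedes it below -/
import Mathlib

section
/- Let α ∈ (-π/2, π/2) and k ∈ [0,1), and let U(α,k) = {w ∈ ℂ : |w - (1+e^{-2iα}k²)/(1-k²)| ≤ 2k·cos α/(1-k²)}. Then for nonzero w ∈ ℂ, 1/w ∈ U(-α,k) if and only if w ∈ U(α,k). -/
open Complex

/-- The disk `U(α,k)` from the paper. -/
def Udisk (α k : ℝ) : Set ℂ :=
  {w : ℂ | ‖w - (1 + Complex.exp (-2 * Complex.I * α) * k ^ 2) / (1 - k ^ 2)‖ ≤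
      2 * k * Real.cos α / (1 - k ^ 2)}

lemma udisk_key (c w : ℂ) (r : ℝ) (hc : Complex.normSq c = 1 + r^2) :
    Complex.normSq (1 - (starRingEnd ℂ) c * w) - r^2 * Complex.normSq w
      = Complex.normSq (w - c) - r^2 := by
  obtain ⟨a, b⟩ := c
  obtain ⟨x, y⟩ := w
  simp [Complex.normSq_apply, Complex.mul_re, Complex.mul_im] at *
  ring_nf
  ring_nf at hc
  nlinarith [hc]

lemma udisk_conj_center (α k : ℝ) :
    (starRingEnd ℂ) ((1 + Complex.exp (-2 * Complex.I * α) * k ^ 2) / (1 - k ^ 2))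
      = (1 + Complex.exp (-2 * Complex.I * (-α : ℝ)) * k ^ 2) / (1 - k ^ 2) := by
  have he : (starRingEnd ℂ) (Complex.exp (-2 * Complex.I * α))
      = Complex.exp (-2 * Complex.I * (-α : ℝ)) := by
    rw [← Complex.exp_conj]
    congr 1
    simp only [map_mul, map_neg, map_ofNat, Complex.conj_I, Complex.conj_ofReal]
    push_cast
    ring
  rw [map_div₀, map_add, map_mul, he]
  congr 1 <;> push_cast <;> simp [Complex.conj_ofReal]

lemma udisk_normSq_center (α k : ℝ) (hk0 : 0 ≤ k) (hk1 : k < 1) :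
    Complex.normSq ((1 + Complex.exp (-2 * Complex.I * α) * k ^ 2) / (1 - k ^ 2))
      = 1 + (2 * k * Real.cos α / (1 - k ^ 2))^2 := by
  have h1 : (1:ℝ) - k^2 ≠ 0 := by nlinarith
  have he : (1 : ℂ) + Complex.exp (-2 * Complex.I * α) * k ^ 2
      = ((1 + Real.cos (2*α) * k^2 : ℝ) : ℂ) + ((-Real.sin (2*α) * k^2 : ℝ) : ℂ) * Complex.I := by
    have : (-2 * Complex.I * α : ℂ) = ((-(2*α) : ℝ) : ℂ) * Complex.I := by push_cast; ring
    rw [this, Complex.exp_mul_I, ← Complex.ofReal_cos, ← Complex.ofReal_sin,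
      Real.cos_neg, Real.sin_neg]
    push_cast; ring
  have hd : ((1:ℂ) - (k:ℂ)^2) = ((1 - k^2 : ℝ) : ℂ) := by push_cast; ring
  rw [map_div₀, he, hd, Complex.normSq_ofReal, Complex.normSq_add_mul_I]
  have hcos2 : Real.cos (2*α) = 2 * Real.cos α ^ 2 - 1 := Real.cos_two_mul α
  have hsin : Real.sin (2*α) ^ 2 = 1 - Real.cos (2*α)^2 := by
    nlinarith [Real.sin_sq_add_cos_sq (2*α)]
  field_simp
  linear_combination ((k^2)^2)*hsin + (2*k^2)*hcos2

theorem stmt_1 (α k : ℝ) (hα : α ∈ Set.Ioo (-(Real.pi / 2)) (Real.pi / 2))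
    (hk0 : 0 ≤ k) (hk1 : k < 1) (w : ℂ) (hw : w ≠ 0) :
    1 / w ∈ Udisk (-α) k ↔ w ∈ Udisk α k := by
  set c : ℂ := (1 + Complex.exp (-2 * Complex.I * α) * k ^ 2) / (1 - k ^ 2) with hc_def
  set r : ℝ := 2 * k * Real.cos α / (1 - k ^ 2) with hr_def
  have hcosα : 0 < Real.cos α := Real.cos_pos_of_mem_Ioo hα
  have h1k : (0:ℝ) < 1 - k^2 := by nlinarith
  have hr : 0 ≤ r := by
    apply div_nonneg _ h1k.le
    positivity
  have hwpos : 0 < ‖w‖ := by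
    simpa [norm_pos_iff] using hw
  have hcN : Complex.normSq c = 1 + r^2 := udisk_normSq_center α k hk0 hk1
  have hkey := udisk_key c w r hcN
  have habs : ‖1/w - (starRingEnd ℂ) c‖ * ‖w‖
      = ‖1 - (starRingEnd ℂ) c * w‖ := by
    rw [← norm_mul]
    congr 1
    field_simp
  have e1 : (1 / w ∈ Udisk (-α) k) ↔
      ‖1/w - (starRingEnd ℂ) c‖ ≤ r := by
    unfold Udisk
    rw [Set.mem_setOf_eq, Real.cos_neg, ← udisk_conj_center, ← hc_def, ← hr_def]
  rw [e1]
  have e2 : ‖1/w - (starRingEnd ℂ) c‖ ≤ r ↔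
      ‖1 - (starRingEnd ℂ) c * w‖ ≤ r * ‖w‖ := by
    rw [← habs, mul_le_mul_iff_of_pos_right hwpos]
  rw [e2]
  have e3 : ‖1 - (starRingEnd ℂ) c * w‖ ≤ r * ‖w‖ ↔
      Complex.normSq (1 - (starRingEnd ℂ) c * w) ≤ r^2 * Complex.normSq w := by
    rw [← Complex.sq_norm, ← Complex.sq_norm, ← mul_pow]
    exact (pow_le_pow_iff_left₀ (norm_nonneg _)
      (by positivity) (by norm_num)).symm
  rw [e3]
  have e4 : Complex.normSq (1 - (starRingEnd ℂ) c * w) ≤ r^2 * Complex.normSq w ↔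
      Complex.normSq (w - c) ≤ r^2 := by
    constructor <;> intro h <;> nlinarith [hkey]
  rw [e4]
  unfold Udisk
  rw [Set.mem_setOf_eq, ← hc_def, ← hr_def, ← Complex.sq_norm]
  exact (pow_le_pow_iff_left₀ (norm_nonneg _) hr (by norm_num : (2:ℕ) ≠ 0))
end

section
/- Let α ∈ (-π/2, π/2), a = tan α, and let f be analytic on 𝔻 with f(0)=0, f'(0)=1. Suppose Re(e^{iα}·z f'(z)/f(z)) > 0 for all z ∈ 𝔻 \ {0} (f is α-spirallike). Then for the chain h(z,t) = e^{(1-ia)t} f(e^{iat}z) one has Re[ḣ(z,t)/(z h'(z,t))] > 0 for all z ∈ 𝔻 \ {0} and all t ≥ 0. -/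
open Complex Metric

private lemma key_lemma (Q : ℂ) (a : ℝ) (hQ : Q ≠ 0)
    (h : 0 < ((1 + Complex.I * a) * Q).re) :
    0 < ((1 - Complex.I * a) / Q + Complex.I * a).re := by
  have hn : 0 < Complex.normSq Q := Complex.normSq_pos.2 hQ
  have e1 : ((1 - Complex.I * a) / Q).re = ((1 + Complex.I * a) * Q).re / Complex.normSq Q := by
    rw [Complex.div_re]
    simp only [Complex.mul_re, Complex.mul_im, Complex.sub_re, Complex.sub_im,
      Complex.add_re, Complex.add_im, Complex.one_re, Complex.one_im, Complex.I_re,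
      Complex.I_im, Complex.ofReal_re, Complex.ofReal_im]
    ring
  have e2 : (Complex.I * (a : ℂ)).re = 0 := by simp
  rw [Complex.add_re, e1, e2, add_zero]
  exact div_pos h hn

theorem stmt_8 (α : ℝ) (hα : α ∈ Set.Ioo (-(Real.pi / 2)) (Real.pi / 2))
    (a : ℝ) (ha : a = Real.tan α)
    (f : ℂ → ℂ) (hf : DifferentiableOn ℂ f (ball (0 : ℂ) 1))
    (hf0 : f 0 = 0) (hf'0 : deriv f 0 = 1)
    (hspiral : ∀ z ∈ ball (0 : ℂ) 1, z ≠ 0 →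
      0 < (Complex.exp (Complex.I * α) * (z * deriv f z / f z)).re) :
    ∀ z ∈ ball (0 : ℂ) 1, z ≠ 0 → ∀ t : ℝ, 0 ≤ t →
      0 < (deriv (fun s : ℝ => Complex.exp ((1 - Complex.I * a) * s) *
            f (Complex.exp (Complex.I * a * s) * z)) t /
          (z * deriv (fun w => Complex.exp ((1 - Complex.I * a) * t) *
            f (Complex.exp (Complex.I * a * t) * w)) z)).re := by
  intro z hz hz0 t ht
  have he2ne : Complex.exp (Complex.I * a * t) ≠ 0 := Complex.exp_ne_zero _
  have he1ne : Complex.exp ((1 - Complex.I * a) * t) ≠ 0 := Complex.exp_ne_zero _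
  have hwball : Complex.exp (Complex.I * a * t) * z ∈ ball (0 : ℂ) 1 := by
    rw [mem_ball_zero_iff] at hz ⊢
    rw [norm_mul, Complex.norm_exp]
    simpa using hz
  have hw0 : Complex.exp (Complex.I * a * t) * z ≠ 0 := mul_ne_zero he2ne hz0
  have hfw : HasDerivAt f (deriv f (Complex.exp (Complex.I * a * t) * z))
      (Complex.exp (Complex.I * a * t) * z) :=
    (hf.differentiableAt (isOpen_ball.mem_nhds hwball)).hasDerivAt
  -- derivative in t
  have g1 : HasDerivAt (fun x : ℂ => Complex.exp ((1 - Complex.I * a) * x))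
      (Complex.exp ((1 - Complex.I * a) * t) * (1 - Complex.I * a)) (t : ℂ) := by
    simpa using ((hasDerivAt_id (t : ℂ)).const_mul (1 - Complex.I * (a : ℂ))).cexp
  have g2 : HasDerivAt (fun x : ℂ => Complex.exp (Complex.I * a * x) * z)
      (Complex.exp (Complex.I * a * t) * (Complex.I * a) * z) (t : ℂ) := by
    simpa using (((hasDerivAt_id (t : ℂ)).const_mul (Complex.I * (a : ℂ))).cexp).mul_const z
  have g3 : HasDerivAt (fun x : ℂ => f (Complex.exp (Complex.I * a * x) * z))
      (deriv f (Complex.exp (Complex.I * a * t) * z) *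
        (Complex.exp (Complex.I * a * t) * (Complex.I * a) * z)) (t : ℂ) :=
    HasDerivAt.comp (h := fun x : ℂ => Complex.exp (Complex.I * a * x) * z) (t : ℂ) hfw g2
  have g4 : HasDerivAt (fun s : ℝ => Complex.exp ((1 - Complex.I * a) * s) *
      f (Complex.exp (Complex.I * a * s) * z))
      (Complex.exp ((1 - Complex.I * a) * t) * (1 - Complex.I * a) *
          f (Complex.exp (Complex.I * a * t) * z) +
        Complex.exp ((1 - Complex.I * a) * t) *
          (deriv f (Complex.exp (Complex.I * a * t) * z) *
            (Complex.exp (Complex.I * a * t) * (Complex.I * a) * z))) t :=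
    (g1.mul g3).comp_ofReal
  -- derivative in z
  have g5 : HasDerivAt (fun y : ℂ => Complex.exp (Complex.I * a * t) * y)
      (Complex.exp (Complex.I * a * t)) z := by
    simpa using (hasDerivAt_id z).const_mul (Complex.exp (Complex.I * a * t))
  have g6 : HasDerivAt (fun y : ℂ => f (Complex.exp (Complex.I * a * t) * y))
      (deriv f (Complex.exp (Complex.I * a * t) * z) * Complex.exp (Complex.I * a * t)) z :=
    HasDerivAt.comp (h := fun y : ℂ => Complex.exp (Complex.I * a * t) * y) z hfw g5
  have g7 : HasDerivAt (fun y : ℂ => Complex.exp ((1 - Complex.I * a) * t) *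
      f (Complex.exp (Complex.I * a * t) * y))
      (Complex.exp ((1 - Complex.I * a) * t) *
        (deriv f (Complex.exp (Complex.I * a * t) * z) * Complex.exp (Complex.I * a * t))) z :=
    g6.const_mul _
  rw [g4.deriv, g7.deriv]
  -- the spirallike hypothesis at w
  have hsp := hspiral _ hwball hw0
  have hQ : Complex.exp (Complex.I * a * t) * z *
      deriv f (Complex.exp (Complex.I * a * t) * z) /
      f (Complex.exp (Complex.I * a * t) * z) ≠ 0 := by
    intro h
    rw [h, mul_zero] at hsp
    simp at hsp
  have hfw0 : f (Complex.exp (Complex.I * a * t) * z) ≠ 0 := by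
    intro h0
    apply hQ
    rw [h0, div_zero]
  have hdf : deriv f (Complex.exp (Complex.I * a * t) * z) ≠ 0 := by
    intro h0
    apply hQ
    rw [h0, mul_zero, zero_div]
  -- rewrite exp(Iα)
  have hc : 0 < Real.cos α := Real.cos_pos_of_mem_Ioo hα
  have hsin : (Real.sin α : ℂ) = (Real.cos α : ℂ) * a := by
    norm_cast
    rw [ha, Real.tan_eq_sin_div_cos]
    field_simp
  have hexp : Complex.exp (Complex.I * α) = (Real.cos α : ℂ) * (1 + Complex.I * a) := by
    rw [mul_comm Complex.I, Complex.exp_mul_I, ← Complex.ofReal_cos, ← Complex.ofReal_sin, hsin]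
    ring
  rw [hexp, mul_assoc, Complex.re_ofReal_mul] at hsp
  have hpos : 0 < ((1 + Complex.I * a) * (Complex.exp (Complex.I * a * t) * z *
      deriv f (Complex.exp (Complex.I * a * t) * z) /
      f (Complex.exp (Complex.I * a * t) * z))).re := by nlinarith [hsp, hc]
  -- identify the ratio
  have hratio : (Complex.exp ((1 - Complex.I * a) * t) * (1 - Complex.I * a) *
          f (Complex.exp (Complex.I * a * t) * z) +
        Complex.exp ((1 - Complex.I * a) * t) *
          (deriv f (Complex.exp (Complex.I * a * t) * z) *
            (Complex.exp (Complex.I * a * t) * (Complex.I * a) * z))) /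
      (z * (Complex.exp ((1 - Complex.I * a) * t) *
        (deriv f (Complex.exp (Complex.I * a * t) * z) * Complex.exp (Complex.I * a * t)))) =
      (1 - Complex.I * a) / (Complex.exp (Complex.I * a * t) * z *
        deriv f (Complex.exp (Complex.I * a * t) * z) /
        f (Complex.exp (Complex.I * a * t) * z)) + Complex.I * a := by
    field_simp
  rw [hratio]
  exact key_lemma _ a hQ hpos
end

section
/- Let f be analytic on 𝔻 with f(0)=0, f'(0)=1, convex (Re(1 + z f''/f') > 0 on 𝔻), and let α ∈ ℂ with |2α-1| ≤ 1, α ≠ 1. Define f_t(z) = α f(z) + e^t (1-α) z f'(z) for t ≥ 0. Then for all z ∈ 𝔻 \ {0} and t ≥ 0 with f_t'(z) ≠ 0: Re[ z f_t'(z) / ḟ_t(z) ] > 0, where z f_t'(z)/ḟ_t(z) = (1/e^t)·α/(1-α) + 1 + z f''(z)/f'(z). -/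
open Complex Metric Filter

lemma deriv_ne_zero_aux (f : ℂ → ℂ) (hf : DifferentiableOn ℂ f (ball (0 : ℂ) 1))
    (hf'0 : deriv f 0 = 1)
    (hconv : ∀ z ∈ ball (0 : ℂ) 1, 0 < (1 + z * deriv (deriv f) z / deriv f z).re) :
    ∀ z ∈ ball (0 : ℂ) 1, deriv f z ≠ 0 := by
  intro z0 hz0 hg0
  have hA : AnalyticOnNhd ℂ f (ball 0 1) := hf.analyticOnNhd isOpen_ball
  have hA' : AnalyticOnNhd ℂ (deriv f) (ball 0 1) := hA.deriv
  -- deriv f is not eventually zero at z0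
  have hnev : ¬ (∀ᶠ w in nhds z0, deriv f w = 0) := by
    intro hev
    have := hA'.eqOn_zero_of_preconnected_of_eventuallyEq_zero
      (convex_ball (0:ℂ) 1).isPreconnected hz0 hev (mem_ball_self one_pos)
    rw [hf'0] at this
    simp at this
  -- order is a finite natural number
  have hAz : AnalyticAt ℂ (deriv f) z0 := hA' z0 hz0
  have hord : analyticOrderAt (deriv f) z0 ≠ ⊤ := fun h => hnev (analyticOrderAt_eq_top.mp h)
  obtain ⟨n, hordn⟩ : ∃ n : ℕ, analyticOrderAt (deriv f) z0 = n := ⟨_, (ENat.coe_toNat hord).symm⟩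
  obtain ⟨h, hh, hh0, hev⟩ := (hAz.analyticOrderAt_eq_natCast (n := n)).mp hordn
  simp only [smul_eq_mul] at hev
  -- n ≥ 1
  have hn1 : n ≠ 0 := by
    intro h0
    have := hev.self_of_nhds
    rw [h0, hg0] at this
    simp at this
    exact hh0 this.symm
  obtain ⟨m, rfl⟩ : ∃ m, n = m + 1 := ⟨n - 1, by omega⟩
  have hz0ne : z0 ≠ 0 := by
    intro h0; rw [h0, hf'0] at hg0; simp at hg0
  -- analyticity of h on an open nhd, to get deriv h continuous
  obtain ⟨s, hs_mem, hs⟩ := hh.eventually_analyticAt.exists_mem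
  have hhint : AnalyticOnNhd ℂ h (interior s) := fun w hw => hs w (interior_subset hw)
  have hz0int : z0 ∈ interior s := mem_interior_iff_mem_nhds.mpr hs_mem
  have hh'z0 : AnalyticAt ℂ (deriv h) z0 := hhint.deriv z0 hz0int
  -- formula for deriv (deriv f) near z0
  have hDg : ∀ᶠ w in nhds z0, deriv (deriv f) w
      = (↑(m+1) : ℂ) * (w - z0)^m * h w + (w - z0)^(m+1) * deriv h w := by
    filter_upwards [hev.eventually_nhds, hh.eventually_analyticAt] with w hw hw2
    have h1 : HasDerivAt (fun u => (u - z0)^(m+1) * h u)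
        ((↑(m+1) : ℂ) * (w - z0)^m * h w + (w - z0)^(m+1) * deriv h w) w := by
      have := (((hasDerivAt_id w).sub_const z0).pow (m+1)).mul hw2.differentiableAt.hasDerivAt
      simp at this
      push_cast
      exact this
    exact (Filter.EventuallyEq.deriv_eq hw).trans h1.deriv
  -- the path ε ↦ (1-ε) z0
  set zf : ℝ → ℂ := fun ε => (1 - (ε:ℂ)) * z0 with hzf
  have htend : Tendsto zf (nhdsWithin 0 (Set.Ioi 0)) (nhds z0) := by
    have hc : Continuous zf := by fun_prop
    have := hc.tendsto 0
    simp only [hzf] at this ⊢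
    simpa using this.mono_left nhdsWithin_le_nhds
  -- bounded term
  have hcB : Tendsto (fun ε => (zf ε * deriv h (zf ε) / h (zf ε)).re)
      (nhdsWithin 0 (Set.Ioi 0)) (nhds ((z0 * deriv h z0 / h z0).re)) := by
    have hc : ContinuousAt (fun w => (w * deriv h w / h w).re) z0 := by
      exact (Complex.continuous_re.continuousAt.comp
        ((continuousAt_id.mul hh'z0.continuousAt).div hh.continuousAt hh0))
    exact hc.tendsto.comp htend
  -- divergent term
  have hAt : Tendsto (fun ε : ℝ => (1 + (m+1 : ℝ)) - (m+1) / ε + (zf ε * deriv h (zf ε) / h (zf ε)).re)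
      (nhdsWithin 0 (Set.Ioi 0)) atBot := by
    have h4 : Tendsto (fun ε : ℝ => (m+1) / ε) (nhdsWithin 0 (Set.Ioi 0)) atTop := by
      simp only [div_eq_mul_inv]
      exact Tendsto.const_mul_atTop (by positivity) tendsto_inv_nhdsGT_zero
    have h5 : Tendsto (fun ε : ℝ => (1 + (m+1 : ℝ)) - (m+1) / ε) (nhdsWithin 0 (Set.Ioi 0)) atBot := by
      simp only [sub_eq_add_neg]
      exact Tendsto.add_atBot tendsto_const_nhds (tendsto_neg_atTop_atBot.comp h4)
    have := Tendsto.add_atBot hcB h5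
    convert this using 2 with ε
    ring
  -- eventual equality with the convexity expression
  have heq : ∀ᶠ ε in nhdsWithin (0:ℝ) (Set.Ioi 0),
      (1 + zf ε * deriv (deriv f) (zf ε) / deriv f (zf ε)).re
      = (1 + (m+1 : ℝ)) - (m+1) / ε + (zf ε * deriv h (zf ε) / h (zf ε)).re := by
    filter_upwards [htend.eventually hev, htend.eventually hDg,
      htend.eventually (hh.continuousAt.eventually_ne hh0),
      self_mem_nhdsWithin] with ε hG hD hhne (hε : ε ∈ Set.Ioi 0)
    have hεpos : (0:ℝ) < ε := hε
    have hεne : (ε : ℂ) ≠ 0 := by exact_mod_cast hεpos.ne'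
    have hd : zf ε - z0 = -(ε:ℂ) * z0 := by simp only [hzf]; ring
    have hdne : zf ε - z0 ≠ 0 := by
      rw [hd]; exact mul_ne_zero (neg_ne_zero.mpr hεne) hz0ne
    have key : (1 : ℂ) + zf ε * deriv (deriv f) (zf ε) / deriv f (zf ε)
        = ((1 + (m+1 : ℝ)) - (m+1) / ε : ℝ) + zf ε * deriv h (zf ε) / h (zf ε) := by
      rw [hG, hD]
      rw [show zf ε = ((1:ℂ) - ε) * z0 from rfl] at *
      rw [hd] at *
      push_cast
      field_simp
      ring
    rw [key]
    simp
  have hfinal : Tendsto (fun ε => (1 + zf ε * deriv (deriv f) (zf ε) / deriv f (zf ε)).re)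
      (nhdsWithin 0 (Set.Ioi 0)) atBot := hAt.congr' (by filter_upwards [heq] with ε hq using hq.symm)
  have hneg : ∀ᶠ ε in nhdsWithin (0:ℝ) (Set.Ioi 0),
      (1 + zf ε * deriv (deriv f) (zf ε) / deriv f (zf ε)).re < 0 :=
    hfinal.eventually (eventually_lt_atBot 0)
  have hball : ∀ᶠ ε in nhdsWithin (0:ℝ) (Set.Ioi 0), zf ε ∈ ball (0:ℂ) 1 :=
    htend.eventually (isOpen_ball.eventually_mem hz0)
  obtain ⟨ε, h1, h2⟩ := (hneg.and hball).exists
  exact absurd (hconv _ h2) (not_lt.mpr h1.le)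

theorem stmt_18 (f : ℂ → ℂ) (hf : DifferentiableOn ℂ f (ball (0 : ℂ) 1))
    (hf0 : f 0 = 0) (hf'0 : deriv f 0 = 1)
    (hconv : ∀ z ∈ ball (0 : ℂ) 1, 0 < (1 + z * deriv (deriv f) z / deriv f z).re)
    (α : ℂ) (hα : ‖2 * α - 1‖ ≤ 1) (hα1 : α ≠ 1) :
    ∀ z ∈ ball (0 : ℂ) 1, z ≠ 0 → ∀ t : ℝ, 0 ≤ t →
      deriv (fun w => α * f w + (Real.exp t : ℂ) * (1 - α) * w * deriv f w) z ≠ 0 →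
      (z * deriv (fun w => α * f w + (Real.exp t : ℂ) * (1 - α) * w * deriv f w) z /
          deriv (fun s : ℝ => α * f z + (Real.exp s : ℂ) * (1 - α) * z * deriv f z) t =
        ((Real.exp t : ℂ))⁻¹ * (α / (1 - α)) + 1 + z * deriv (deriv f) z / deriv f z) ∧
      0 < (z * deriv (fun w => α * f w + (Real.exp t : ℂ) * (1 - α) * w * deriv f w) z /
          deriv (fun s : ℝ => α * f z + (Real.exp s : ℂ) * (1 - α) * z * deriv f z) t).re := by
  intro z hz hz0 t ht _
  have hA : AnalyticOnNhd ℂ f (ball 0 1) := hf.analyticOnNhd isOpen_ball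
  have hfz : deriv f z ≠ 0 := deriv_ne_zero_aux f hf hf'0 hconv z hz
  have hαne : (1 : ℂ) - α ≠ 0 := sub_ne_zero.mpr (fun h => hα1 h.symm)
  have hene : ((Real.exp t : ℝ) : ℂ) ≠ 0 := by
    exact_mod_cast (Real.exp_pos t).ne'
  -- time derivative
  have hT : deriv (fun s : ℝ => α * f z + (Real.exp s : ℂ) * (1 - α) * z * deriv f z) t
      = (Real.exp t : ℂ) * (1 - α) * z * deriv f z := by
    have h1 : HasDerivAt (fun s : ℝ => ((Real.exp s : ℝ) : ℂ)) ((Real.exp t : ℝ) : ℂ) t :=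
      (Real.hasDerivAt_exp t).ofReal_comp
    have h2 := ((h1.mul_const (1 - α)).mul_const z).mul_const (deriv f z)
    have h3 := (hasDerivAt_const t (α * f z)).add h2
    have h4 := h3.deriv
    rw [zero_add] at h4
    exact h4
  -- space derivative
  have hfd : HasDerivAt f (deriv f z) z := (hA z hz).differentiableAt.hasDerivAt
  have hf'd : HasDerivAt (deriv f) (deriv (deriv f) z) z :=
    (hA.deriv z hz).differentiableAt.hasDerivAt
  have hS : deriv (fun w => α * f w + (Real.exp t : ℂ) * (1 - α) * w * deriv f w) z
      = α * deriv f z + (Real.exp t : ℂ) * (1 - α) * deriv f z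
        + (Real.exp t : ℂ) * (1 - α) * z * deriv (deriv f) z := by
    have h2 : HasDerivAt (fun w : ℂ => (Real.exp t : ℂ) * (1 - α) * w)
        ((Real.exp t : ℂ) * (1 - α)) z := by
      simpa using (hasDerivAt_id z).const_mul ((Real.exp t : ℂ) * (1 - α))
    have h3 := (hfd.const_mul α).add (h2.mul hf'd)
    have := h3.deriv
    exact this.trans (by ring)
  rw [hT, hS]
  constructor
  · field_simp
  · have heq : (z * (α * deriv f z + (Real.exp t : ℂ) * (1 - α) * deriv f z
        + (Real.exp t : ℂ) * (1 - α) * z * deriv (deriv f) z) /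
        ((Real.exp t : ℂ) * (1 - α) * z * deriv f z))
        = ((Real.exp t : ℂ))⁻¹ * (α / (1 - α)) + (1 + z * deriv (deriv f) z / deriv f z) := by
      field_simp
      ring
    rw [heq]
    rw [Complex.add_re]
    have h1 : 0 ≤ (((Real.exp t : ℂ))⁻¹ * (α / (1 - α))).re := by
      have hre : 0 ≤ (α / (1 - α)).re := by
        have h1 : Complex.normSq (2 * α - 1) ≤ 1 := by
          have h2 := Complex.sq_norm (2 * α - 1)
          nlinarith [norm_nonneg (2 * α - 1)]
        have h2 : α.re ^ 2 + α.im ^ 2 ≤ α.re := by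
          simp only [Complex.normSq_apply, Complex.sub_re, Complex.sub_im, Complex.mul_re,
            Complex.mul_im, Complex.one_re, Complex.one_im, Complex.re_ofNat, Complex.im_ofNat] at h1
          nlinarith
        rw [Complex.div_re]
        have h3 : 0 ≤ Complex.normSq (1 - α) := Complex.normSq_nonneg _
        simp only [Complex.sub_re, Complex.sub_im, Complex.one_re, Complex.one_im]
        rw [← add_div]
        apply div_nonneg _ h3
        nlinarith
      rw [← Complex.ofReal_inv, Complex.re_ofReal_mul]
      exact mul_nonneg (by positivity) hre
    have h2 := hconv z hz
    linarith
end
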